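/- Let P be a finite poset, k a field, and Q a (not necessarily convex) full subposet of P. If n is a natural number such that every persistence module over P admits an interval resolution of length at most n, then every persistence module over Q admits an interval resolution of length at most n. In particular, the interval resolution global dimension of k[Q] is at most that of k[P]. -/

import Mathlib

open CategoryTheory CategoryTheory.Limits

attribute [local instance] CategoryTheory.Limits.HasFiniteBiproducts.of_hasFiniteProducts

section Posets

variable {P : Type} [PartialOrder P]

/-- Zigzag connectivity of two elements of a subset `S` of a poset: they are linked by a
zigzag of comparable pairs inside `S`. -/
def ZigzagConnIn (S : Set P) (a b : S) : Prop :=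
  Relation.ReflTransGen (fun u v : S => (u : P) ≤ v ∨ (v : P) ≤ u) a b

/-- A subset of a poset is convex if `x ≤ z ≤ y` with `x, y` in the subset implies `z` is. -/
def IsConvex (S : Set P) : Prop :=
  ∀ ⦃x y z : P⦄, x ∈ S → y ∈ S → x ≤ z → z ≤ y → z ∈ S

/-- An interval of a poset: a nonempty, convex, zigzag-connected subset. -/
def IsIntervalSet (S : Set P) : Prop :=
  S.Nonempty ∧ IsConvex S ∧ ∀ a b : S, ZigzagConnIn S a b

end Posets

section IntervalModules

variable (k : Type) [Field k] {P : Type} [PartialOrder P]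

open Classical in
/-- The linear map between the fibers of the interval module. -/
noncomputable def intervalModuleAux (S : Set P) (p q : P) :
    ↥(if p ∈ S then (⊤ : Submodule k k) else ⊥) →ₗ[k]
      ↥(if q ∈ S then (⊤ : Submodule k k) else ⊥) where
  toFun x := ⟨(if p ∈ S ∧ q ∈ S then (1 : k) else 0) * x.1, by
    by_cases hq : q ∈ S
    · rw [if_pos hq]; exact Submodule.mem_top
    · rw [if_neg hq, if_neg (fun h => hq h.2), zero_mul]; exact Submodule.zero_mem _⟩
  map_add' x y := by ext; simp [mul_add]
  map_smul' c x := by ext; simp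

open Classical in
/-- The interval module `k_S` associated to a convex subset `S` of a poset `P`:
it is `k` at points of `S`, `0` elsewhere, with identity structure maps inside `S`. -/
noncomputable def intervalModule (S : Set P) (hS : IsConvex S) : P ⥤ ModuleCat.{0} k where
  obj p := ModuleCat.of k ↥(if p ∈ S then (⊤ : Submodule k k) else ⊥)
  map {p q} _ := ModuleCat.ofHom (intervalModuleAux k S p q)
  map_id p := by
    apply ModuleCat.hom_ext
    apply LinearMap.ext
    rintro ⟨x, hx⟩
    apply Subtype.ext
    show (if p ∈ S ∧ p ∈ S then (1 : k) else 0) * x = x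
    by_cases hp : p ∈ S
    · simp [hp]
    · rw [if_neg hp] at hx
      simp [hp, (Submodule.mem_bot k).mp hx]
  map_comp {p q r} f g := by
    apply ModuleCat.hom_ext
    apply LinearMap.ext
    rintro ⟨x, hx⟩
    apply Subtype.ext
    show (if p ∈ S ∧ r ∈ S then (1 : k) else 0) * x
      = (if q ∈ S ∧ r ∈ S then (1 : k) else 0) * ((if p ∈ S ∧ q ∈ S then (1 : k) else 0) * x)
    by_cases hp : p ∈ S
    · by_cases hr : r ∈ S
      · have hq : q ∈ S := hS hp hr (leOfHom f) (leOfHom g)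
        simp [hp, hq, hr]
      · simp [hr]
    · rw [if_neg hp] at hx
      simp [(Submodule.mem_bot k).mp hx]

/-- A persistence module is an interval module if it is isomorphic to `k_S` for some
interval `S`. -/
def IsIntervalModule (M : P ⥤ ModuleCat.{0} k) : Prop :=
  ∃ (S : Set P) (hS : IsIntervalSet S), Nonempty (M ≅ intervalModule k S hS.2.1)

/-- A persistence module is interval-decomposable if it is isomorphic to a finite direct sum
of interval modules. -/
def IsIntervalDecomposable (M : P ⥤ ModuleCat.{0} k) : Prop :=
  ∃ (n : ℕ) (J : Fin n → (P ⥤ ModuleCat.{0} k)),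
    (∀ i, IsIntervalModule k (J i)) ∧ Nonempty (M ≅ ⨁ J)

/-- The support of a persistence module. -/
def moduleSupport (M : P ⥤ ModuleCat.{0} k) : Set P := {p : P | ¬ IsZero (M.obj p)}

/-- A persistence module valued in finite-dimensional vector spaces. -/
def PointwiseFinite (M : P ⥤ ModuleCat.{0} k) : Prop :=
  ∀ p : P, FiniteDimensional k (M.obj p)

end IntervalModules

section Approximations

variable {C : Type*} [Category C]

/-- `f : X ⟶ M` is a right `𝒳`-approximation of `M` if `X ∈ 𝒳` and every morphism
from an object of `𝒳` to `M` factors through `f`. -/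
def IsRightApproximation (𝒳 : C → Prop) {X M : C} (f : X ⟶ M) : Prop :=
  𝒳 X ∧ ∀ ⦃Y : C⦄ (g : Y ⟶ M), 𝒳 Y → ∃ h : Y ⟶ X, h ≫ f = g

/-- `f : X ⟶ M` is right minimal if every endomorphism `g` of `X` with `f ∘ g = f`
is an isomorphism. -/
def IsRightMinimal {X M : C} (f : X ⟶ M) : Prop :=
  ∀ g : X ⟶ X, g ≫ f = f → IsIso g

end Approximations

/-- An interval cover: a right minimal approximation by interval-decomposable modules. -/
def IsIntervalCover (k : Type) [Field k] {P : Type} [PartialOrder P]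
    {X M : P ⥤ ModuleCat.{0} k} (f : X ⟶ M) : Prop :=
  IsRightApproximation (IsIntervalDecomposable k) f ∧ IsRightMinimal f

section Resolutions

variable {C : Type*} [Category C] [Limits.HasZeroMorphisms C]

/-- `M` admits a resolution `0 ⟶ J_n ⟶ ⋯ ⟶ J_1 ⟶ J_0 ⟶ M ⟶ 0` of length `n` by objects
of `𝒳`: an exact sequence in which every `J_i` lies in `𝒳`.  (The data is encoded by an
`ℕ`-indexed complex which vanishes in degrees `> n` and is exact everywhere.) -/
def HasResolutionOfLength (𝒳 : C → Prop) (n : ℕ) (M : C) : Prop :=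
  ∃ (J : ℕ → C) (d : ∀ i, J (i + 1) ⟶ J i) (f : J 0 ⟶ M) (w0 : d 0 ≫ f = 0)
    (w : ∀ i, d (i + 1) ≫ d i = 0),
    (∀ i, i ≤ n → 𝒳 (J i)) ∧ (∀ i, n < i → IsZero (J i)) ∧
    Epi f ∧ (ShortComplex.mk (d 0) f w0).Exact ∧
    ∀ i, (ShortComplex.mk (d (i + 1)) (d i) (w i)).Exact

end Resolutions

/-! ### Auxiliary material for the proof -/

section SigmaBiproduct

variable {C' : Type*} [Category C'] [HasZeroMorphisms C'] [HasFiniteBiproducts C']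
  {J : Type} [Finite J] {K : J → Type} [∀ j, Finite (K j)]

/-- Flattening of a finite biproduct of finite biproducts. -/
noncomputable def sigmaBiproductIso (f : ∀ j : J, K j → C') :
    (⨁ fun j => ⨁ f j) ≅ ⨁ (fun p : Σ j, K j => f p.1 p.2) where
  hom := biproduct.desc fun j => biproduct.desc fun s =>
    biproduct.ι (fun p : Σ j, K j => f p.1 p.2) ⟨j, s⟩
  inv := biproduct.desc fun p => biproduct.ι (f p.1) p.2 ≫ biproduct.ι (fun j => ⨁ f j) p.1
  hom_inv_id := by
    apply biproduct.hom_ext'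
    intro j
    simp only [biproduct.ι_desc_assoc, Category.comp_id]
    apply biproduct.hom_ext'
    intro s
    simp
  inv_hom_id := by
    apply biproduct.hom_ext'
    rintro ⟨j, s⟩
    simp

end SigmaBiproduct

section ScalMap

open Classical

variable (k : Type) [Field k]

/-- The fiber module attached to a proposition. -/
noncomputable def FibM (A : Prop) : ModuleCat.{0} k :=
  ModuleCat.of k ↥(if A then (⊤ : Submodule k k) else ⊥)

/-- The canonical map between fiber modules. -/
noncomputable def scalMap (A B : Prop) : FibM k A ⟶ FibM k B := ModuleCat.ofHom {
  toFun x := ⟨(if A ∧ B then (1 : k) else 0) * x.1, by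
    by_cases hB : B
    · rw [if_pos hB]; exact Submodule.mem_top
    · rw [if_neg hB, if_neg (fun h => hB h.2), zero_mul]; exact Submodule.zero_mem _⟩
  map_add' x y := by
    apply Subtype.ext
    exact mul_add _ _ _
  map_smul' c x := by
    apply Subtype.ext
    exact mul_left_comm _ _ _ }

lemma scalMap_comp_scalMap (A B C : Prop) (h : A → C → B) :
    scalMap k A B ≫ scalMap k B C = scalMap k A C := by
  apply ModuleCat.hom_ext
  apply LinearMap.ext
  intro x
  apply Subtype.ext
  show (if B ∧ C then (1:k) else 0) * ((if A ∧ B then (1:k) else 0) * x.1)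
      = (if A ∧ C then (1:k) else 0) * x.1
  by_cases hA : A
  · by_cases hC : C
    · simp [hA, hC, h hA hC]
    · simp [hC]
  · simp [hA]

lemma scalMap_id (A : Prop) : scalMap k A A = 𝟙 (FibM k A) := by
  apply ModuleCat.hom_ext
  apply LinearMap.ext
  rintro ⟨x, hx⟩
  apply Subtype.ext
  show (if A ∧ A then (1:k) else 0) * x = x
  by_cases hA : A
  · simp [hA]
  · rw [if_neg hA] at hx
    simp [hA, (Submodule.mem_bot k).mp hx]

lemma scalMap_eq_zero (A B : Prop) (h : ¬ (A ∧ B)) : scalMap k A B = 0 := by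
  apply ModuleCat.hom_ext
  apply LinearMap.ext
  intro x
  apply Subtype.ext
  show (if A ∧ B then (1:k) else 0) * x.1 = 0
  simp [h]

end ScalMap

section Components

variable {X : Type} [PartialOrder X]

/-- Zigzag relation on elements of the ambient poset. -/
def zzRel (T : Set X) (a b : X) : Prop :=
  ∃ (ha : a ∈ T) (hb : b ∈ T), ZigzagConnIn T ⟨a, ha⟩ ⟨b, hb⟩

lemma zzRel_refl {T : Set X} {a : X} (ha : a ∈ T) : zzRel T a a :=
  ⟨ha, ha, Relation.ReflTransGen.refl⟩

lemma zzRel_symm {T : Set X} {a b : X} (h : zzRel T a b) : zzRel T b a := by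
  obtain ⟨ha, hb, hz⟩ := h
  exact ⟨hb, ha, @Std.Symm.symm _ _ (@Relation.ReflTransGen.stdSymm _ _ ⟨fun u v huv => huv.symm⟩) _ _ hz⟩

lemma zzRel_trans {T : Set X} {a b c : X} (h1 : zzRel T a b) (h2 : zzRel T b c) :
    zzRel T a c := by
  obtain ⟨ha, hb, hz1⟩ := h1
  obtain ⟨hb', hc, hz2⟩ := h2
  exact ⟨ha, hc, hz1.trans hz2⟩

lemma zzRel_step {T : Set X} {a b : X} (ha : a ∈ T) (hb : b ∈ T) (h : a ≤ b ∨ b ≤ a) :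
    zzRel T a b := ⟨ha, hb, Relation.ReflTransGen.single h⟩

/-- The zigzag connected component of `a` inside `T`. -/
def zzComp (T : Set X) (a : X) : Set X := {b | zzRel T a b}

lemma zzComp_subset (T : Set X) (a : X) : zzComp T a ⊆ T := fun _ h => h.2.1

lemma mem_zzComp_self {T : Set X} {a : X} (ha : a ∈ T) : a ∈ zzComp T a := zzRel_refl ha

lemma zzComp_eq_of_mem {T : Set X} {a b : X} (h : b ∈ zzComp T a) :
    zzComp T a = zzComp T b :=
  Set.ext fun _ => ⟨fun hc => zzRel_trans (zzRel_symm h) hc, fun hc => zzRel_trans h hc⟩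

lemma mem_zzComp_iff_of_step {T : Set X} {a q q' : X} (hq : q ∈ T) (hq' : q' ∈ T)
    (hc : q ≤ q' ∨ q' ≤ q) : q ∈ zzComp T a ↔ q' ∈ zzComp T a :=
  ⟨fun h => zzRel_trans h (zzRel_step hq hq' hc),
   fun h => zzRel_trans h (zzRel_step hq' hq hc.symm)⟩

lemma zzComp_convex {T : Set X} (hT : IsConvex T) (a : X) : IsConvex (zzComp T a) := by
  intro x y z hx hy hxz hzy
  have hz : z ∈ T := hT (zzComp_subset T a hx) (zzComp_subset T a hy) hxz hzy
  exact (mem_zzComp_iff_of_step (zzComp_subset T a hx) hz (Or.inl hxz)).mp hx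

lemma zigzag_in_comp {T : Set X} {a : X} :
    ∀ (u v : ↥T), ZigzagConnIn T u v → ∀ hu : (u : X) ∈ zzComp T a,
      ∃ hv : (v : X) ∈ zzComp T a,
        ZigzagConnIn (zzComp T a) ⟨u, hu⟩ ⟨v, hv⟩ := by
  intro u v h
  induction h with
  | refl => exact fun hu => ⟨hu, Relation.ReflTransGen.refl⟩
  | @tail b c _ hbc ih =>
    intro hu
    obtain ⟨hb, hp⟩ := ih hu
    have hc : (c : X) ∈ zzComp T a :=
      (mem_zzComp_iff_of_step b.2 c.2 hbc).mp hb
    exact ⟨hc, hp.tail hbc⟩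

lemma zzComp_interval {T : Set X} (hT : IsConvex T) {a : X} (ha : a ∈ T) :
    IsIntervalSet (zzComp T a) := by
  refine ⟨⟨a, mem_zzComp_self ha⟩, zzComp_convex hT a, ?_⟩
  rintro ⟨b, hb⟩ ⟨c, hc⟩
  obtain ⟨hbT, hcT, hz⟩ := zzRel_trans (zzRel_symm hb) hc
  obtain ⟨hc', hp⟩ := zigzag_in_comp (a := a) ⟨b, hbT⟩ ⟨c, hcT⟩ hz hb
  exact hp

end Components

section Decomp

open Classical

variable (k : Type) [Field k] {P : Type} [PartialOrder P] (Q : Set P)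

/-- The inclusion functor of a full subposet. -/
def inclQ : ↥Q ⥤ P := (show Monotone (Subtype.val : ↥Q → P) from fun _ _ h => h).functor

lemma isIntervalDecomposable_of_iso_biproduct {Y : Type} [PartialOrder Y]
    {A : Type} [Fintype A] (G : A → (Y ⥤ ModuleCat.{0} k))
    (hG : ∀ a, IsIntervalModule k (G a)) (M : Y ⥤ ModuleCat.{0} k)
    (e : M ≅ ⨁ G) : IsIntervalDecomposable k M := by
  refine ⟨Fintype.card A, fun i => G ((Fintype.equivFin A).symm i), fun i => hG _, ⟨?_⟩⟩
  exact e ≪≫ biproduct.whiskerEquiv (Fintype.equivFin A)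
    (fun a => eqToIso (congrArg G (Equiv.symm_apply_apply _ _)))

lemma isIntervalDecomposable_biproduct {Y : Type} [PartialOrder Y]
    {A : Type} [Fintype A] (G : A → (Y ⥤ ModuleCat.{0} k))
    (hG : ∀ a, IsIntervalDecomposable k (G a)) (M : Y ⥤ ModuleCat.{0} k)
    (e : M ≅ ⨁ G) : IsIntervalDecomposable k M := by
  choose n K hK eK using hG
  let e2 : (⨁ G) ≅ ⨁ (fun a => ⨁ K a) := biproduct.mapIso (fun a => (eK a).some)
  let e3 := sigmaBiproductIso (fun a => K a)
  exact isIntervalDecomposable_of_iso_biproduct k _ (fun p : Σ a, Fin (n a) => hK p.1 p.2) M (e ≪≫ e2 ≪≫ e3)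

end Decomp

section MainDecomp

open Classical

variable (k : Type) [Field k] {P : Type} [PartialOrder P] [Finite P] (Q : Set P)

lemma restr_interval_decomposable (S : Set P) (hS : IsConvex S) :
    IsIntervalDecomposable k (inclQ Q ⋙ intervalModule k S hS) := by
  set T : Set ↥Q := {q : ↥Q | (q : P) ∈ S} with hTdef
  have hTconv : IsConvex T := fun x y z hx hy hxz hzy => hS hx hy hxz hzy
  let A := {C : Set ↥Q // ∃ a, ∃ _ : a ∈ T, C = zzComp T a}
  haveI : Fintype A := Fintype.ofFinite A
  have hsub : ∀ C : A, C.1 ⊆ T := by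
    rintro ⟨C, a, ha, rfl⟩
    exact zzComp_subset T a
  have hmemiff : ∀ (C : A) (q q' : ↥Q), q ∈ T → q' ∈ T → (q ≤ q' ∨ q' ≤ q) →
      (q ∈ C.1 ↔ q' ∈ C.1) := by
    rintro ⟨C, a, ha, rfl⟩ q q' hq hq' hc
    exact mem_zzComp_iff_of_step hq hq' hc
  have huniq : ∀ (C : A) (q : ↥Q), q ∈ C.1 → C.1 = zzComp T q := by
    rintro ⟨C, a, ha, rfl⟩ q hq
    exact zzComp_eq_of_mem hq
  have hdisj : ∀ (C D : A), C ≠ D → ∀ q : ↥Q, ¬ (q ∈ C.1 ∧ q ∈ D.1) := by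
    rintro C D hCD q ⟨hqC, hqD⟩
    exact hCD (Subtype.ext ((huniq C q hqC).trans (huniq D q hqD).symm))
  have hint : ∀ C : A, IsIntervalSet C.1 := by
    rintro ⟨C, a, ha, rfl⟩
    exact zzComp_interval hTconv ha
  let G : A → (↥Q ⥤ ModuleCat.{0} k) := fun C => intervalModule k C.1 (hint C).2.1
  let π : ∀ C : A, (inclQ Q ⋙ intervalModule k S hS) ⟶ G C := fun C =>
    { app := fun q => scalMap k (q ∈ T) (q ∈ C.1)
      naturality := fun q q' f => by
        show scalMap k (q ∈ T) (q' ∈ T) ≫ scalMap k (q' ∈ T) (q' ∈ C.1)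
            = scalMap k (q ∈ T) (q ∈ C.1) ≫ scalMap k (q ∈ C.1) (q' ∈ C.1)
        rw [scalMap_comp_scalMap k _ _ _ (fun _ h' => hsub C h'),
            scalMap_comp_scalMap k _ _ _ (fun hq hq' =>
              (hmemiff C q q' hq (hsub C hq') (Or.inl (leOfHom f))).mpr hq')] }
  let σ : ∀ C : A, G C ⟶ (inclQ Q ⋙ intervalModule k S hS) := fun C =>
    { app := fun q => scalMap k (q ∈ C.1) (q ∈ T)
      naturality := fun q q' f => by
        show scalMap k (q ∈ C.1) (q' ∈ C.1) ≫ scalMap k (q' ∈ C.1) (q' ∈ T)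
            = scalMap k (q ∈ C.1) (q ∈ T) ≫ scalMap k (q ∈ T) (q' ∈ T)
        rw [scalMap_comp_scalMap k _ _ _ (fun hq hq' =>
              (hmemiff C q q' (hsub C hq) hq' (Or.inl (leOfHom f))).mp hq),
            scalMap_comp_scalMap k _ _ _ (fun hq _ => hsub C hq)] }
  refine isIntervalDecomposable_of_iso_biproduct k G
    (fun C => ⟨C.1, hint C, ⟨Iso.refl _⟩⟩) _ ?_
  refine ⟨biproduct.lift π, biproduct.desc σ, ?_, ?_⟩
  · -- lift π ≫ desc σ = 𝟙
    rw [biproduct.lift_desc]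
    apply NatTrans.ext
    funext q
    rw [NatTrans.app_sum]
    apply ModuleCat.hom_ext
    apply LinearMap.ext
    intro x
    apply Subtype.ext
    rw [show ((∑ C : A, (π C ≫ σ C).app q) x) = ∑ C : A, ((π C ≫ σ C).app q x) from
      (LinearMap.congr_fun (ModuleCat.hom_sum _ _) x).trans (LinearMap.sum_apply _ _ x)]
    refine (AddSubmonoidClass.coe_finset_sum
      (S := (if (inclQ Q).obj q ∈ S then (⊤ : Submodule k k) else ⊥)) _ _).trans ?_
    have hterm : ∀ C : A, (((π C ≫ σ C).app q) x).1
        = (if q ∈ C.1 ∧ q ∈ T then (1:k) else 0) *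
          ((if (q ∈ T) ∧ q ∈ C.1 then (1:k) else 0) * x.1) := fun C => rfl
    have hid : (((𝟙 (inclQ Q ⋙ intervalModule k S hS) : _ ⟶ _).app q) x).1 = x.1 := rfl
    rw [hid, Finset.sum_congr rfl fun C _ => hterm C]
    by_cases hq : q ∈ T
    · have hone : ∀ C : A, (if q ∈ C.1 ∧ q ∈ T then (1:k) else 0) *
          ((if (q ∈ T) ∧ q ∈ C.1 then (1:k) else 0) * x.1)
          = if q ∈ C.1 then x.1 else 0 := by
        intro C
        by_cases hC : q ∈ C.1 <;> simp [hC, hq]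
      rw [Finset.sum_congr rfl fun C _ => hone C]
      rw [Finset.sum_eq_single (⟨zzComp T q, q, hq, rfl⟩ : A)]
      · rw [if_pos (mem_zzComp_self hq)]
      · intro C _ hC
        rw [if_neg]
        intro hqC
        exact hC (Subtype.ext (huniq C q hqC))
      · intro habs
        exact absurd (Finset.mem_univ _) habs
    · have hite : (if (inclQ Q).obj q ∈ S then (⊤ : Submodule k k) else ⊥) = ⊥ := if_neg hq
      obtain ⟨xv, hxv⟩ := x
      rw [hite] at hxv
      have hx0 : xv = 0 := (Submodule.mem_bot k).mp hxv
      simp [hx0]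
  · -- desc σ ≫ lift π = 𝟙
    apply biproduct.hom_ext'
    intro C
    apply biproduct.hom_ext
    intro D
    simp only [biproduct.ι_desc_assoc, Category.assoc, biproduct.lift_π, Category.comp_id,
      biproduct.ι_π]
    by_cases hCD : C = D
    · subst hCD
      rw [dif_pos rfl]
      apply NatTrans.ext
      funext q
      show scalMap k (q ∈ C.1) (q ∈ T) ≫ scalMap k (q ∈ T) (q ∈ C.1) = _
      rw [scalMap_comp_scalMap k _ _ _ (fun hq _ => hsub C hq), scalMap_id]
      rfl
    · rw [dif_neg hCD]
      apply NatTrans.ext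
      funext q
      show scalMap k (q ∈ C.1) (q ∈ T) ≫ scalMap k (q ∈ T) (q ∈ D.1) = _
      rw [scalMap_comp_scalMap k _ _ _ (fun hq _ => hsub C hq),
        scalMap_eq_zero k _ _ (hdisj C D hCD q)]
      rfl

end MainDecomp

section Extension

variable (k : Type) [Field k] {P : Type} [PartialOrder P] (Q : Set P)

/-- The submodule of compatible sections defining the extension of `N` at `p`. -/
noncomputable def extSub (N : ↥Q ⥤ ModuleCat.{0} k) (p : P) :
    Submodule k (∀ q : {q : ↥Q // p ≤ (q : P)}, N.obj q.1) where
  carrier := {s | ∀ (q q' : {q : ↥Q // p ≤ (q : P)}) (h : q.1 ≤ q'.1),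
    N.map (homOfLE h) (s q) = s q'}
  add_mem' := fun {a b} ha hb q q' h => by
    simp only [Pi.add_apply, map_add, ha q q' h, hb q q' h]
  zero_mem' := fun q q' h => by simp
  smul_mem' := fun c a ha q q' h => by
    simp only [Pi.smul_apply, map_smul, ha q q' h]

/-- The extension of a persistence module on `Q` to one on `P` (right Kan extension). -/
noncomputable def extFun (N : ↥Q ⥤ ModuleCat.{0} k) : P ⥤ ModuleCat.{0} k where
  obj p := ModuleCat.of k (extSub k Q N p)
  map {p p'} f := ModuleCat.ofHom
    { toFun := fun s => ⟨fun q => s.1 ⟨q.1, le_trans (leOfHom f) q.2⟩,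
        fun q q' h => s.2 ⟨q.1, le_trans (leOfHom f) q.2⟩ ⟨q'.1, le_trans (leOfHom f) q'.2⟩ h⟩
      map_add' := fun s t => rfl
      map_smul' := fun c s => rfl }
  map_id := fun p => by
    apply ModuleCat.hom_ext
    apply LinearMap.ext
    intro s
    rfl
  map_comp := fun f g => by
    apply ModuleCat.hom_ext
    apply LinearMap.ext
    intro s
    rfl

lemma extFun_pointwiseFinite [Finite P] (N : ↥Q ⥤ ModuleCat.{0} k)
    (hN : PointwiseFinite k N) : PointwiseFinite k (extFun k Q N) := by
  intro p
  haveI : ∀ q : {q : ↥Q // p ≤ (q : P)}, FiniteDimensional k (N.obj q.1) := fun q => hN q.1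
  haveI : FiniteDimensional k (∀ q : {q : ↥Q // p ≤ (q : P)}, N.obj q.1) := inferInstance
  exact inferInstanceAs (FiniteDimensional k (extSub k Q N p))

/-- Restricting the extension gives back the original module. -/
noncomputable def extRestrIso (N : ↥Q ⥤ ModuleCat.{0} k) :
    inclQ Q ⋙ extFun k Q N ≅ N := by
  refine NatIso.ofComponents (fun q => LinearEquiv.toModuleIso
    { toFun := fun s => s.1 ⟨q, le_refl _⟩
      map_add' := fun s t => rfl
      map_smul' := fun c s => rfl
      invFun := fun x => ⟨fun r => N.map (homOfLE r.2) x, fun r r' h => by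
        show (N.map (homOfLE r.2) ≫ N.map (homOfLE h)) x = N.map (homOfLE r'.2) x
        rw [← N.map_comp]
        rfl⟩
      left_inv := fun s => Subtype.ext (funext fun r => s.2 ⟨q, le_refl _⟩ r r.2)
      right_inv := fun x => by
        show N.map (homOfLE (le_refl _)) x = x
        rw [show homOfLE (le_refl q) = 𝟙 q from rfl, N.map_id]
        rfl }) ?_
  intro q q' f
  apply ModuleCat.hom_ext
  apply LinearMap.ext
  intro s
  exact (s.2 ⟨q, le_refl _⟩ ⟨q', leOfHom f⟩ (leOfHom f)).symm

end Extension

section Restriction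

variable (k : Type) [Field k] {P : Type} [PartialOrder P] [Finite P] (Q : Set P)

instance : ((Functor.whiskeringLeft ↥Q P (ModuleCat.{0} k)).obj (inclQ Q)).Additive :=
  ⟨rfl⟩

lemma restr_decomposable (X : P ⥤ ModuleCat.{0} k) (hX : IsIntervalDecomposable k X) :
    IsIntervalDecomposable k (inclQ Q ⋙ X) := by
  obtain ⟨m, J, hJ, ⟨e⟩⟩ := hX
  let R := (Functor.whiskeringLeft ↥Q P (ModuleCat.{0} k)).obj (inclQ Q)
  haveI : PreservesBiproduct J R :=
    preservesBiproduct_of_preservesProduct R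
  refine isIntervalDecomposable_biproduct k (fun i => R.obj (J i)) ?_ _
    (R.mapIso e ≪≫ Functor.mapBiproduct R J)
  intro i
  obtain ⟨S, hS, ⟨eS⟩⟩ := hJ i
  obtain ⟨m', K, hK, ⟨e'⟩⟩ := restr_interval_decomposable k Q S hS.2.1
  exact ⟨m', K, hK, ⟨R.mapIso eS ≪≫ e'⟩⟩

end Restriction


/-- Monotonicity of interval resolution (global) dimension: if every
persistence module over `P` admits an interval resolution of length at most `n`, then so does
every persistence module over any full subposet `Q` of `P`.  In particular the interval
resolution global dimension of `k[Q]` is at most that of `k[P]`. -/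
theorem intervalResolution_monotone_fullSubposet
    (k : Type) [Field k] (P : Type) [PartialOrder P] [Finite P] (Q : Set P) (n : ℕ)
    (h : ∀ M : P ⥤ ModuleCat.{0} k, PointwiseFinite k M →
      ∃ m ≤ n, HasResolutionOfLength (IsIntervalDecomposable k) m M) :
    ∀ N : ↥Q ⥤ ModuleCat.{0} k, PointwiseFinite k N →
      ∃ m ≤ n, HasResolutionOfLength (IsIntervalDecomposable k) m N := by
  intro N hN
  obtain ⟨m, hm, J, d, f₀, w0, w, hX, hZ, hepi, hex0, hex⟩ :=
    h (extFun k Q N) (extFun_pointwiseFinite k Q N hN)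
  refine ⟨m, hm, ?_⟩
  let R := (Functor.whiskeringLeft ↥Q P (ModuleCat.{0} k)).obj (inclQ Q)
  haveI : PreservesFiniteLimits R := ⟨fun J' _ _ => inferInstance⟩
  haveI : PreservesFiniteColimits R := ⟨fun J' _ _ => inferInstance⟩
  let ε := extRestrIso k Q N
  have hw0 : R.map (d 0) ≫ R.map f₀ = 0 := by
    rw [← R.map_comp, w0, R.map_zero]
  have hw0' : R.map (d 0) ≫ (R.map f₀ ≫ ε.hom) = 0 := by
    rw [← Category.assoc, hw0, zero_comp]
  have hw' : ∀ i, R.map (d (i + 1)) ≫ R.map (d i) = 0 := fun i => by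
    rw [← R.map_comp, w i, R.map_zero]
  refine ⟨fun i => R.obj (J i), fun i => R.map (d i), R.map f₀ ≫ ε.hom, hw0', hw',
    ?_, ?_, ?_, ?_, ?_⟩
  · exact fun i hi => restr_decomposable k Q (J i) (hX i hi)
  · intro i hi
    exact Functor.isZero _ fun q => ((Functor.isZero_iff (J i)).mp (hZ i hi)) _
  · haveI : Epi f₀ := hepi
    haveI : ∀ q : ↥Q, Epi ((R.map f₀).app q) := fun q =>
      inferInstanceAs (Epi (f₀.app ((inclQ Q).obj q)))
    haveI : Epi (R.map f₀) := NatTrans.epi_of_epi_app _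
    exact epi_comp _ _
  · have hm0 := hex0.map R
    refine ShortComplex.exact_of_iso ?_ hm0
    refine ShortComplex.isoMk (Iso.refl _) (Iso.refl _) ε ?_ ?_
    · exact (Category.id_comp _).trans (Category.comp_id _).symm
    · exact Category.id_comp _
  · exact fun i => (hex i).map R
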